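/- The quantity C_g := min_{1≤i≤g+1} min(J_i, W_i) is a conserved quantity of the UD-pTL: if Σ_{i=1}^{g+1} J_i < Σ_{i=1}^{g+1} W_i, then min_{1≤i≤g+1} min(J̄_i, W̄_i) = min_{1≤i≤g+1} min(J_i, W_i). -/

import Mathlib

open Fin.NatCast

/-- `X_i = max_{0 ≤ k ≤ g} Σ_{l=1}^{k} (J_{i-l} - W_{i-l})`, indices cyclic mod `g+1`. -/
noncomputable def udX (g : ℕ) (J W : Fin (g + 1) → ℝ) (i : Fin (g + 1)) : ℝ :=
  (Finset.range (g + 1)).sup' ⟨0, Finset.mem_range.mpr (Nat.succ_pos g)⟩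
    (fun k => ∑ l ∈ Finset.Icc 1 k, (J (i - (l : Fin (g + 1))) - W (i - (l : Fin (g + 1)))))


lemma udX_le_sup (g : ℕ) (J W : Fin (g + 1) → ℝ) (i : Fin (g + 1)) (k : ℕ)
    (hk : k ∈ Finset.range (g+1)) :
    ∑ l ∈ Finset.Icc 1 k, (J (i - (l : Fin (g + 1))) - W (i - (l : Fin (g + 1))))
      ≤ udX g J W i :=
  Finset.le_sup' (s := Finset.range (g+1)) (fun k : ℕ => ∑ l ∈ Finset.Icc 1 k,
    (J (i - (l : Fin (g + 1))) - W (i - (l : Fin (g + 1))))) hk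

lemma udX_nonneg (g : ℕ) (J W : Fin (g + 1) → ℝ) (i : Fin (g + 1)) : 0 ≤ udX g J W i := by
  have := udX_le_sup g J W i 0 (Finset.mem_range.mpr (Nat.succ_pos g))
  simpa using this

lemma sum_Icc_one_eq (f : ℕ → ℝ) (n : ℕ) :
    ∑ l ∈ Finset.Icc 1 n, f l = ∑ j ∈ Finset.range n, f (1 + j) := by
  induction n with
  | zero => simp
  | succ n ih =>
    rw [Finset.sum_Icc_succ_top (Nat.succ_le_succ (Nat.zero_le n)),
      Finset.sum_range_succ, ih, add_comm 1 n]

lemma udX_shift (g : ℕ) (J W : Fin (g + 1) → ℝ) (i : Fin (g + 1))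
    (hpos : 0 < udX g J W i) :
    udX g J W i ≤ (J (i - 1) - W (i - 1)) + udX g J W (i - 1) := by
  classical
  obtain ⟨k, hk, hkeq⟩ := Finset.exists_mem_eq_sup' (s := Finset.range (g+1))
    ⟨0, Finset.mem_range.mpr (Nat.succ_pos g)⟩
    (fun k : ℕ => ∑ l ∈ Finset.Icc 1 k, (J (i - (l : Fin (g + 1))) - W (i - (l : Fin (g + 1)))))
  have hXi : udX g J W i = ∑ l ∈ Finset.Icc 1 k,
      (J (i - (l : Fin (g + 1))) - W (i - (l : Fin (g + 1)))) := hkeq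
  match k, hk with
  | 0, _ => simp [hXi] at hpos
  | (m+1), hk =>
    have hm : m ∈ Finset.range (g+1) := by
      have := Finset.mem_range.mp hk; exact Finset.mem_range.mpr (by omega)
    have key : ∑ l ∈ Finset.Icc 1 (m+1), (J (i - (l : Fin (g + 1))) - W (i - (l : Fin (g + 1))))
        = (J (i-1) - W (i-1)) + ∑ l ∈ Finset.Icc 1 m,
          (J ((i-1) - (l : Fin (g + 1))) - W ((i-1) - (l : Fin (g + 1)))) := by
      rw [sum_Icc_one_eq, sum_Icc_one_eq, Finset.sum_range_succ']
      have hterm : ∀ j : ℕ, i - ((1 + (j+1) : ℕ) : Fin (g+1)) = (i - 1) - ((1 + j : ℕ) : Fin (g+1)) := by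
        intro j; push_cast; abel
      have h1 : i - ((1 + 0 : ℕ) : Fin (g+1)) = i - 1 := by norm_num
      rw [add_comm, h1]
      congr 1
      exact Finset.sum_congr rfl (fun j _ => by rw [hterm j])
    calc udX g J W i = _ := hXi
      _ = _ := key
      _ ≤ (J (i-1) - W (i-1)) + udX g J W (i-1) := by
          have := udX_le_sup g J W (i-1) m hm
          linarith

/-- `J̄_i = min(W_i, X_i + J_i)`. -/
noncomputable def udJbar (g : ℕ) (J W : Fin (g + 1) → ℝ) (i : Fin (g + 1)) : ℝ :=
  min (W i) (udX g J W i + J i)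

/-- `W̄_i = J_{i+1} + W_i - J̄_i`. -/
noncomputable def udWbar (g : ℕ) (J W : Fin (g + 1) → ℝ) (i : Fin (g + 1)) : ℝ :=
  J (i + 1) + W i - udJbar g J W i


/-- `C_g = min_{1 ≤ i ≤ g+1} min(J_i, W_i)` is a conserved quantity of the UD-pTL. -/
theorem udpToda_Cg_conserved (g : ℕ) (hg : 1 ≤ g) (J W : Fin (g + 1) → ℝ)
    (h : ∑ i, J i < ∑ i, W i) :
    Finset.univ.inf' Finset.univ_nonempty
        (fun i => min (udJbar g J W i) (udWbar g J W i)) =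
      Finset.univ.inf' Finset.univ_nonempty (fun i => min (J i) (W i)) := by
  set C := Finset.univ.inf' Finset.univ_nonempty (fun i => min (J i) (W i)) with hC
  have hCle : ∀ i, C ≤ min (J i) (W i) := fun i =>
    Finset.inf'_le _ (Finset.mem_univ i)
  have hwit : ∀ i : Fin (g+1), min (udJbar g J W i) (udWbar g J W i) ≤ C →
      Finset.univ.inf' Finset.univ_nonempty
        (fun i => min (udJbar g J W i) (udWbar g J W i)) ≤ C := by
    intro i hi
    exact le_trans (Finset.inf'_le (fun i => min (udJbar g J W i) (udWbar g J W i))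
      (Finset.mem_univ i)) hi
  apply le_antisymm
  · obtain ⟨i0, -, hi0⟩ := Finset.exists_mem_eq_inf' (s := (Finset.univ : Finset (Fin (g+1))))
      Finset.univ_nonempty (fun i => min (J i) (W i))
    by_cases hw : W i0 ≤ J i0
    · refine hwit i0 ?_
      have hCW : C = W i0 := by rw [hC, hi0]; exact min_eq_right hw
      calc min (udJbar g J W i0) (udWbar g J W i0) ≤ udJbar g J W i0 := min_le_left _ _
        _ ≤ W i0 := min_le_left _ _
        _ = C := hCW.symm
    · push_neg at hw
      have hCJ : C = J i0 := by rw [hC, hi0]; exact min_eq_left hw.le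
      by_cases hx : udX g J W i0 ≤ 0
      · refine hwit i0 ?_
        calc min (udJbar g J W i0) (udWbar g J W i0) ≤ udJbar g J W i0 := min_le_left _ _
          _ ≤ udX g J W i0 + J i0 := min_le_right _ _
          _ ≤ J i0 := by linarith
          _ = C := hCJ.symm
      · push_neg at hx
        have hshift := udX_shift g J W i0 hx
        refine hwit (i0 - 1) ?_
        have hJb : udJbar g J W (i0-1) = W (i0-1) := by
          apply min_eq_left
          have := udX_nonneg g J W (i0-1)
          linarith
        have hWb : udWbar g J W (i0-1) = J i0 := by
          rw [udWbar, hJb, sub_add_cancel]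
          ring
        calc min (udJbar g J W (i0-1)) (udWbar g J W (i0-1)) ≤ udWbar g J W (i0-1) :=
            min_le_right _ _
          _ = J i0 := hWb
          _ = C := hCJ.symm
  · apply Finset.le_inf'
    intro i _
    have h1 : C ≤ min (J i) (W i) := hCle i
    have h2 : C ≤ min (J (i+1)) (W (i+1)) := hCle (i+1)
    have hx := udX_nonneg g J W i
    simp only [le_min_iff] at h1 h2
    have hJb : C ≤ udJbar g J W i := le_min h1.2 (by linarith [h1.1])
    have hWb : C ≤ udWbar g J W i := by
      have : udJbar g J W i ≤ W i := min_le_left _ _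
      rw [udWbar]; linarith [h2.1]
    exact le_min hJb hWb
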